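/- (Subfactor Projection Lemma, lower part) Let X⁻ be normal in the subgroup X⁺ of a group G, and Y⁻ ≤ Y⁺ subgroups of G. Then (((Y⁻ ⊓ X⁺) ⊔ X⁻) ⊓ Y⁺) ⊔ Y⁻ = (X⁻ ⊓ Y⁺) ⊔ Y⁻. -/

import Mathlib

theorem stmt_11 {G : Type*} [Group G] (Xm Xp Ym Yp : Subgroup G)
    (hX : Xm ≤ Xp) (hXn : (Xm.subgroupOf Xp).Normal) (hY : Ym ≤ Yp) :
    (((Ym ⊓ Xp) ⊔ Xm) ⊓ Yp) ⊔ Ym = (Xm ⊓ Yp) ⊔ Ym := by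
  apply le_antisymm
  · refine sup_le ?_ le_sup_right
    rintro g ⟨hg1, hgYp⟩
    have hle : (Ym ⊓ Xp) ⊔ Xm ≤ Xp := sup_le inf_le_right hX
    set x : Xp := ⟨g, hle hg1⟩ with hx
    have hx' : x ∈ ((Ym ⊓ Xp).subgroupOf Xp) ⊔ (Xm.subgroupOf Xp) := by
      rw [← Subgroup.subgroupOf_sup inf_le_right hX, Subgroup.mem_subgroupOf]
      exact hg1
    rw [← SetLike.mem_coe, Subgroup.mul_normal] at hx'
    obtain ⟨a, ha, b, hb, hab⟩ := hx'
    have hgab : g = (a : G) * (b : G) := by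
      have := congrArg (Subtype.val) hab
      simpa using this.symm
    have haYm : (a : G) ∈ Ym := ha.1
    have hbXm : (b : G) ∈ Xm := hb
    have hbYp : (b : G) ∈ Yp := by
      have : (b : G) = (a : G)⁻¹ * g := by rw [hgab]; group
      rw [this]
      exact mul_mem (inv_mem (hY haYm)) hgYp
    rw [hgab]
    exact mul_mem (Subgroup.mem_sup_right haYm)
      (Subgroup.mem_sup_left ⟨hbXm, hbYp⟩)
  · refine sup_le ?_ le_sup_right
    intro g hg
    exact Subgroup.mem_sup_left ⟨Subgroup.mem_sup_right hg.1, hg.2⟩
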